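/- Let S be a finite set with m = |S|, let N ≥ 0 be an integer, and let σ ∈ D(S, N). Then the union X_σ = ⋃_{(≤₁,τ) ∈ J(σ)} FN_{(≤₁,τ)} of Fox–Neuwirth cells equals the set of all configurations p ∈ Conf(S) satisfying conditions (C1) and (C2). -/

import Mathlib

/-- The configuration space `Conf S`: the set of injective maps (configurations)
`p : S → ℝ × ℝ`, as a subset of the product space `S → ℝ × ℝ`. -/
def Conf (S : Type*) : Set (S → ℝ × ℝ) := {p | Function.Injective p}

/-- Condition (I) on a surjection `σ`: consecutive values are distinct. -/
def CondI {S : Type*} {k : ℕ} (σ : Fin k → S) : Prop :=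
  ∀ i j : Fin k, (j : ℕ) = (i : ℕ) + 1 → σ i ≠ σ j

/-- Condition (II): no interleaving pattern `i₁ < j₁ < i₂ < j₂` with
`i₁, i₂ ∈ σ⁻¹(s)` and `j₁, j₂ ∈ σ⁻¹(s')` for `s ≠ s'`. -/
def CondII {S : Type*} {k : ℕ} (σ : Fin k → S) : Prop :=
  ¬ ∃ (s s' : S) (i₁ j₁ i₂ j₂ : Fin k),
      s ≠ s' ∧ i₁ < j₁ ∧ j₁ < i₂ ∧ i₂ < j₂ ∧
      σ i₁ = s ∧ σ i₂ = s ∧ σ j₁ = s' ∧ σ j₂ = s'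

/-- `σ ∈ D(S, N)`: a surjection `σ : {1, …, N + |S|} → S` satisfying (I) and (II).
(The condition `k = N + |S|` is imposed as a separate hypothesis in the theorems.) -/
def MemD {S : Type*} {k : ℕ} (σ : Fin k → S) : Prop :=
  Function.Surjective σ ∧ CondI σ ∧ CondII σ

/-- Condition (C1) on a configuration `p`: if some element of `σ⁻¹(s)` lies strictly
between two elements of `σ⁻¹(s')` (for `s ≠ s'`) then `x_s < x_{s'}`. -/
def CondC1 {S : Type*} {k : ℕ} (σ : Fin k → S) (p : S → ℝ × ℝ) : Prop :=
  ∀ s s' : S, s ≠ s' →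
    (∃ i j₁ j₂ : Fin k, σ i = s ∧ σ j₁ = s' ∧ σ j₂ = s' ∧ j₁ < i ∧ i < j₂) →
    (p s).1 < (p s').1

/-- Condition (C2) on a configuration `p`: if `x_s = x_{s'}` (for `s ≠ s'`) and every
element of `σ⁻¹(s)` is smaller than every element of `σ⁻¹(s')` then `y_s < y_{s'}`. -/
def CondC2 {S : Type*} {k : ℕ} (σ : Fin k → S) (p : S → ℝ × ℝ) : Prop :=
  ∀ s s' : S, s ≠ s' → (p s).1 = (p s').1 →
    (∀ i j : Fin k, σ i = s → σ j = s' → i < j) →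
    (p s).2 < (p s').2

/-- A pruned 2-tree on `S`: a linear order `r` (as a `≤`-relation) together with a
surjection `τ : S → Fin n` which is monotone with respect to `r`. -/
def IsPruned2Tree {S : Type*} {n : ℕ} (r : S → S → Prop) (τ : S → Fin n) : Prop :=
  IsLinearOrder S r ∧ Function.Surjective τ ∧ ∀ s s', r s s' → τ s ≤ τ s'

/-- The Fox–Neuwirth cell of a 2-tree `(r, τ)`: configurations `p` such that
(i) `τ s < τ s'` implies `x_s < x_{s'}`, and (ii) `τ s = τ s'` and `s <₁ s'`
imply `x_s = x_{s'}` and `y_s < y_{s'}`. -/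
def FNcell {S : Type*} {n : ℕ} (r : S → S → Prop) (τ : S → Fin n) :
    Set (S → ℝ × ℝ) :=
  {p | Function.Injective p ∧
    (∀ s s', τ s < τ s' → (p s).1 < (p s').1) ∧
    (∀ s s', τ s = τ s' → r s s' → s ≠ s' →
      (p s).1 = (p s').1 ∧ (p s).2 < (p s').2)}

/-- `σ ∈ D(τ, N)`: the additional conditions (B) and (C) relative to the 2-tree
`(r, τ)` (conditions (I), (II) and surjectivity, i.e. `σ ∈ D(S, N)`, are imposed
separately). -/
def MemDtree {S : Type*} {n k : ℕ} (r : S → S → Prop) (τ : S → Fin n)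
    (σ : Fin k → S) : Prop :=
  (∀ s s' : S, s ≠ s' →
      (∃ i j₁ j₂ : Fin k, σ i = s ∧ σ j₁ = s' ∧ σ j₂ = s' ∧ j₁ < i ∧ i < j₂) →
      τ s < τ s') ∧
  (∀ s s' : S, τ s = τ s' → r s s' → s ≠ s' →
      ∀ i j : Fin k, σ i = s → σ j = s' → i < j)

/-- The union `X_σ` of the Fox–Neuwirth cells over all pruned 2-trees
`(r, τ)` on `S` with `σ ∈ D(τ, N)` equals the set of configurations satisfying (C1)
and (C2). -/
theorem statement2 {S : Type*} [Fintype S] (N k : ℕ)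
    (hk : k = N + Fintype.card S) (σ : Fin k → S) (hσ : MemD σ) :
    {p : S → ℝ × ℝ | ∃ (n : ℕ) (r : S → S → Prop) (τ : S → Fin n),
        IsPruned2Tree r τ ∧ MemDtree r τ σ ∧ p ∈ FNcell r τ}
      = {p : S → ℝ × ℝ | p ∈ Conf S ∧ CondC1 σ p ∧ CondC2 σ p} := by
  obtain ⟨hσsurj, hI, hII⟩ := hσ
  ext p
  simp only [Set.mem_setOf_eq]
  constructor
  · rintro ⟨n, r, τ, ⟨hlin, hτsurj, hmono⟩, ⟨hB, hC⟩, hpinj, hFN1, hFN2⟩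
    refine ⟨hpinj, ?_, ?_⟩
    · intro s s' hne h
      exact hFN1 s s' (hB s s' hne h)
    · intro s s' hne hx hall
      have hττ : τ s = τ s' := by
        rcases lt_trichotomy (τ s) (τ s') with h | h | h
        · exact absurd (hFN1 s s' h) (by rw [hx]; exact lt_irrefl _)
        · exact h
        · exact absurd (hFN1 s' s h) (by rw [hx]; exact lt_irrefl _)
      rcases hlin.total s s' with hr | hr
      · exact (hFN2 s s' hττ hr hne).2
      · exfalso
        obtain ⟨i, hi⟩ := hσsurj s
        obtain ⟨j, hj⟩ := hσsurj s'
        exact lt_asymm (hall i j hi hj) (hC s' s hττ.symm hr hne.symm j i hj hi)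
  · rintro ⟨hpinj, hC1, hC2⟩
    -- separation lemma
    have hsep : ∀ s s' : S, s ≠ s' → (p s).1 = (p s').1 →
        (∀ i j : Fin k, σ i = s → σ j = s' → i < j) ∨
        (∀ i j : Fin k, σ i = s' → σ j = s → i < j) := by
      intro s s' hne hx
      by_contra hcon
      push_neg at hcon
      obtain ⟨⟨a, b, ha, hb, hba⟩, ⟨b', a', hb', ha', hab'⟩⟩ := hcon
      -- b ≤ a with σ a = s, σ b = s'; a' ≤ b' with σ b' = s', σ a' = s
      have hba' : b < a := lt_of_le_of_ne hba (by rintro rfl; exact hne (ha.symm.trans hb))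
      have hab'' : a' < b' := lt_of_le_of_ne hab' (by rintro rfl; exact hne (ha'.symm.trans hb'))
      rcases lt_or_ge b a' with h1 | h2
      · exact absurd hx (ne_of_lt (hC1 s s' hne ⟨a', b, b', ha', hb, hb', h1, hab''⟩))
      · have h3 : a' < b := lt_of_le_of_ne h2 (by rintro rfl; exact hne (ha' ▸ hb))
        exact absurd hx.symm
          (ne_of_lt (hC1 s' s hne.symm ⟨b, a', a, hb, ha', ha, h3, hba'⟩))
    classical
    set t : Finset ℝ := Finset.univ.image (fun s => (p s).1) with ht
    have hmem : ∀ s : S, (p s).1 ∈ t := fun s =>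
      Finset.mem_image_of_mem _ (Finset.mem_univ s)
    set e := t.orderIsoOfFin rfl with he
    set τ : S → Fin t.card := fun s => e.symm ⟨(p s).1, hmem s⟩ with hτ
    have hτlt : ∀ s s' : S, τ s < τ s' ↔ (p s).1 < (p s').1 := by
      intro s s'
      rw [hτ]
      simp only [OrderIso.lt_iff_lt, Subtype.mk_lt_mk]
    have hτeq : ∀ s s' : S, τ s = τ s' ↔ (p s).1 = (p s').1 := by
      intro s s'
      rw [hτ]
      simp only [EmbeddingLike.apply_eq_iff_eq, Subtype.mk.injEq]
    set r : S → S → Prop := fun s s' =>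
      (p s).1 < (p s').1 ∨ ((p s).1 = (p s').1 ∧ (p s).2 ≤ (p s').2) with hr
    have hyne : ∀ s s' : S, s ≠ s' → (p s).1 = (p s').1 → (p s).2 ≠ (p s').2 := by
      intro s s' hne hx hy
      exact hne (hpinj (Prod.ext hx hy))
    refine ⟨t.card, r, τ, ⟨?_, ?_, ?_⟩, ⟨?_, ?_⟩, hpinj, ?_, ?_⟩
    · -- linear order
      refine { refl := ?_, trans := ?_, antisymm := ?_, total := ?_ }
      · intro a; exact Or.inr ⟨rfl, le_refl _⟩
      · rintro a b c (h1 | ⟨h1, h1'⟩) (h2 | ⟨h2, h2'⟩)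
        · exact Or.inl (h1.trans h2)
        · exact Or.inl (h2 ▸ h1)
        · exact Or.inl (h1 ▸ h2)
        · exact Or.inr ⟨h1.trans h2, h1'.trans h2'⟩
      · rintro a b (h1 | ⟨h1, h1'⟩) (h2 | ⟨h2, h2'⟩)
        · exact absurd h2 (asymm h1)
        · exact absurd h2.symm (ne_of_lt h1)
        · exact absurd h1.symm (ne_of_lt h2)
        · exact hpinj (Prod.ext h1 (le_antisymm h1' h2'))
      · intro a b
        rcases lt_trichotomy (p a).1 (p b).1 with h | h | h
        · exact Or.inl (Or.inl h)
        · rcases le_total (p a).2 (p b).2 with h' | h'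
          · exact Or.inl (Or.inr ⟨h, h'⟩)
          · exact Or.inr (Or.inr ⟨h.symm, h'⟩)
        · exact Or.inr (Or.inl h)
    · -- τ surjective
      intro a
      obtain ⟨s, _, hs⟩ := Finset.mem_image.mp (e a).2
      have h2 : (⟨(p s).1, hmem s⟩ : t) = e a := Subtype.ext hs
      exact ⟨s, by rw [hτ]; exact (congrArg e.symm h2).trans (e.symm_apply_apply a)⟩
    · -- monotone
      rintro s s' (h | ⟨h, _⟩)
      · exact le_of_lt ((hτlt s s').mpr h)
      · exact le_of_eq ((hτeq s s').mpr h)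
    · -- condition (B)
      intro s s' hne h
      exact (hτlt s s').mpr (hC1 s s' hne h)
    · -- condition (C)
      intro s s' hττ hrel hne i j hi hj
      have hx : (p s).1 = (p s').1 := (hτeq s s').mp hττ
      have hy : (p s).2 < (p s').2 := by
        rcases hrel with h | ⟨_, h⟩
        · exact absurd hx (ne_of_lt h)
        · exact lt_of_le_of_ne h (hyne s s' hne hx)
      rcases hsep s s' hne hx with h | h
      · exact h i j hi hj
      · exact absurd (hC2 s' s hne.symm hx.symm h) (not_lt.mpr (le_of_lt hy))
    · -- FN (i)
      intro s s' h
      exact (hτlt s s').mp h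
    · -- FN (ii)
      intro s s' hττ hrel hne
      have hx : (p s).1 = (p s').1 := (hτeq s s').mp hττ
      refine ⟨hx, ?_⟩
      rcases hrel with h | ⟨_, h⟩
      · exact absurd hx (ne_of_lt h)
      · exact lt_of_le_of_ne h (hyne s s' hne hx)
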